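/- (Lemma 12) Let ∇F_{π_ℓ}(𝐱_t^ℓ) ∈ ℝ^{n×p} denote the matrix whose i-th row is ∇f_{i,π_ℓ^i}(x_{i,t}^ℓ). Then for all t, ℓ: E[‖∇F_{π_ℓ}(𝐱_t^ℓ)‖²] ≤ 6L²n E[‖x̄_t^{ℓ} − x̄_*^{ℓ}‖²] + 6L² E[‖𝐱_t^{ℓ} − 𝟏(x̄_t^{ℓ})^⊺‖²] + 3n σ_*² + 6nL σ_shuffle². -/

import Mathlib

open Finset
open scoped RealInnerProductSpace

noncomputable section

namespace DRR

/-- Vectors in ℝ^p. -/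
abbrev Vec (p : ℕ) := EuclideanSpace ℝ (Fin p)

/-- Sample space: one permutation of `[m]` per agent and per epoch. -/
abbrev Omega (n m : ℕ) := ℕ → Fin n → Equiv.Perm (Fin m)

/-- Expectation of a quantity that depends only on the permutations of the first `T`
epochs: the finite uniform average over those coordinates (unused later coordinates
are frozen to the identity permutation). -/
noncomputable def expE {n m : ℕ} (T : ℕ) (g : Omega n m → ℝ) : ℝ :=
  (∑ σ : Fin T → Fin n → Equiv.Perm (Fin m),
      g fun k i => if h : k < T then σ ⟨k, h⟩ i else 1) /
    Fintype.card (Fin T → Fin n → Equiv.Perm (Fin m))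

/-- Expectation over a single epoch's permutations. -/
noncomputable def expPerm {n m : ℕ} (g : (Fin n → Equiv.Perm (Fin m)) → ℝ) : ℝ :=
  (∑ π : Fin n → Equiv.Perm (Fin m), g π) / Fintype.card (Fin n → Equiv.Perm (Fin m))

/-- Spectral norm (ℓ₂ operator norm) of W − (1/n)𝟏𝟏ᵀ. -/
noncomputable def rhoW {n : ℕ} (W : Matrix (Fin n) (Fin n) ℝ) : ℝ :=
  ‖LinearMap.toContinuousLinearMap
      (Matrix.toEuclideanLin (W - (n : ℝ)⁻¹ • Matrix.of fun _ _ => (1 : ℝ)))‖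

/-- Average x̄ of the agents' vectors. -/
noncomputable def avg {n p : ℕ} (x : Fin n → Vec p) : Vec p := (n : ℝ)⁻¹ • ∑ i, x i

/-- Squared Frobenius consensus error ‖𝐱 − 𝟏x̄ᵀ‖². -/
noncomputable def consSq {n p : ℕ} (x : Fin n → Vec p) : ℝ := ∑ i, ‖x i - avg x‖ ^ 2

/-- The "real limit points" x̄_*^ℓ = x* − α ∑_{k<ℓ} (1/n) ∑_i ∇f_{i,π_k^i}(x*). -/
noncomputable def xbarStar {n m p : ℕ} (f : Fin n → Fin m → Vec p → ℝ) (xstar : Vec p)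
    (α : ℝ) (π : Fin n → Equiv.Perm (Fin m)) (ℓ : ℕ) : Vec p :=
  xstar - α • ∑ k ∈ univ.filter fun k : Fin m => (k : ℕ) < ℓ,
    (n : ℝ)⁻¹ • ∑ i, gradient (f i (π i k)) xstar

/-- σ_*² := (1/(mn)) ∑_i ∑_ℓ ‖∇f_{i,ℓ}(x*)‖². -/
noncomputable def sigStarSq {n m p : ℕ} (f : Fin n → Fin m → Vec p → ℝ) (xstar : Vec p) : ℝ :=
  ((m : ℝ) * n)⁻¹ * ∑ i, ∑ ℓ, ‖gradient (f i ℓ) xstar‖ ^ 2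

/-- The shuffling variance σ_shuffle² for stepsize α. -/
noncomputable def sigShuffleSq {n m p : ℕ} (f : Fin n → Fin m → Vec p → ℝ) (xstar : Vec p)
    (α : ℝ) : ℝ :=
  ⨆ ℓ : Fin m, expPerm fun π =>
    ((n : ℝ)⁻¹ * ∑ i, f i (π i ℓ) (xbarStar f xstar α π ℓ))
      - ((n : ℝ)⁻¹ * ∑ i, f i (π i ℓ) xstar)
      - (inner ℝ ((n : ℝ)⁻¹ • ∑ i, gradient (f i (π i ℓ)) xstar)
          (xbarStar f xstar α π ℓ - xstar) : ℝ)

/-- Condition (A) on the stepsize. -/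
def condA (ρ μ L α : ℝ) : Prop :=
  α ≤ min (Real.sqrt ((2 - ρ ^ 2) / (24 * ρ ^ 2 * (5 - ρ ^ 2))) * (1 - ρ ^ 2) / L)
      (min ((1 - ρ ^ 2) / (2 * μ)) ((1 - ρ ^ 2) * μ / (8 * Real.sqrt 30 * L ^ 2)))

/-- The Lyapunov function H_t^ℓ. -/
noncomputable def Hfun {n m p : ℕ} (W : Matrix (Fin n) (Fin n) ℝ)
    (f : Fin n → Fin m → Vec p → ℝ) (xstar : Vec p) (μ L : ℝ) (α : ℕ → ℝ)
    (x : Omega n m → ℕ → ℕ → Fin n → Vec p) (t ℓ : ℕ) : ℝ :=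
  expE (t + 1) (fun ω => ‖avg (x ω t ℓ) - xbarStar f xstar (α t) (ω t) ℓ‖ ^ 2)
    + (16 * α t * L ^ 2 / (n * μ * (1 - rhoW W ^ 2)))
        * expE (t + 1) (fun ω => consSq (x ω t ℓ))



/-! ### Auxiliary lemmas -/

section Aux
open scoped RealInnerProductSpace

lemma aux_hasDerivAt_line {p : ℕ} (g : Vec p → ℝ) (hg : Differentiable ℝ g)
    (y d : Vec p) (s : ℝ) :
    HasDerivAt (fun s : ℝ => g (y + s • d)) (inner ℝ (gradient g (y + s • d)) d : ℝ) s := by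
  have h1 : HasDerivAt (fun s : ℝ => y + s • d) d s := by
    simpa using ((hasDerivAt_id s).smul_const d).const_add y
  have h2 := ((hg (y + s • d)).hasGradientAt).hasFDerivAt
  have := h2.comp_hasDerivAt s h1
  exact this.congr_deriv (by simp [InnerProductSpace.toDual_apply_apply])

lemma aux_le_of_F01 (F : ℝ → ℝ) (F' : ℝ → ℝ) (hF : ∀ s, HasDerivAt F (F' s) s)
    (hpos : ∀ s, s ∈ Set.Ioo (0:ℝ) 1 → 0 ≤ F' s) : F 0 ≤ F 1 := by
  have hmono : MonotoneOn F (Set.Icc (0:ℝ) 1) := by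
    apply monotoneOn_of_deriv_nonneg (convex_Icc 0 1)
    · exact fun s _ => ((hF s).differentiableAt).continuousAt.continuousWithinAt
    · intro s hs
      exact ((hF s).differentiableAt).differentiableWithinAt
    · intro s hs
      rw [interior_Icc] at hs
      rw [(hF s).deriv]
      exact hpos s hs
  exact hmono (by norm_num) (by norm_num) (by norm_num)

lemma aux_descent {p : ℕ} (g : Vec p → ℝ) (hg : Differentiable ℝ g) (L : ℝ)
    (hLip : ∀ u v : Vec p, ‖gradient g u - gradient g v‖ ≤ L * ‖u - v‖) (x y : Vec p) :
    g x ≤ g y + (inner ℝ (gradient g y) (x - y) : ℝ) + L / 2 * ‖x - y‖ ^ 2 := by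
  set d := x - y with hd
  set F : ℝ → ℝ := fun s =>
    g y + s * (inner ℝ (gradient g y) d : ℝ) + L / 2 * s ^ 2 * ‖d‖ ^ 2 - g (y + s • d) with hF
  have key : F 0 ≤ F 1 := by
    apply aux_le_of_F01 F (fun s =>
      (inner ℝ (gradient g y) d : ℝ) + L * s * ‖d‖ ^ 2 - (inner ℝ (gradient g (y + s • d)) d : ℝ))
    · intro s
      have h1 := aux_hasDerivAt_line g hg y d s
      have h2 : HasDerivAt (fun s : ℝ => g y + s * (inner ℝ (gradient g y) d : ℝ)
          + L / 2 * s ^ 2 * ‖d‖ ^ 2)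
          ((inner ℝ (gradient g y) d : ℝ) + L * s * ‖d‖ ^ 2) s := by
        have ha : HasDerivAt (fun s : ℝ => s * (inner ℝ (gradient g y) d : ℝ))
            (inner ℝ (gradient g y) d : ℝ) s := by
          simpa using (hasDerivAt_id s).mul_const (inner ℝ (gradient g y) d : ℝ)
        have hb : HasDerivAt (fun s : ℝ => L / 2 * s ^ 2 * ‖d‖ ^ 2)
            (L * s * ‖d‖ ^ 2) s := by
          have : HasDerivAt (fun s : ℝ => s ^ 2) (2 * s) s := by
            simpa using hasDerivAt_pow 2 s
          have := ((this.const_mul (L / 2)).mul_const (‖d‖ ^ 2))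
          exact this.congr_deriv (by ring)
        have := (ha.const_add (g y)).add hb
        exact this
      exact h2.sub h1
    · intro s hs
      have hineq : (inner ℝ (gradient g (y + s • d)) d : ℝ) - (inner ℝ (gradient g y) d : ℝ)
          ≤ L * s * ‖d‖ ^ 2 := by
        have h1 : (inner ℝ (gradient g (y + s • d) - gradient g y) d : ℝ)
            ≤ ‖gradient g (y + s • d) - gradient g y‖ * ‖d‖ := real_inner_le_norm _ _
        have h2 : ‖gradient g (y + s • d) - gradient g y‖ ≤ L * (s * ‖d‖) := by
          have := hLip (y + s • d) y
          simpa [norm_smul, abs_of_pos hs.1, mul_assoc] using this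
        have h3 : ‖gradient g (y + s • d) - gradient g y‖ * ‖d‖ ≤ L * (s * ‖d‖) * ‖d‖ :=
          mul_le_mul_of_nonneg_right h2 (norm_nonneg _)
        rw [inner_sub_left] at h1
        nlinarith [h1, h3]
      linarith
  have e0 : F 0 = 0 := by simp [hF]
  have e1 : F 1 = g y + (inner ℝ (gradient g y) d : ℝ) + L / 2 * ‖d‖ ^ 2 - g x := by
    simp [hF, hd]
  rw [e0, e1] at key
  linarith

lemma aux_convex_lower {p : ℕ} (g : Vec p → ℝ) (hg : Differentiable ℝ g)
    (hmono : ∀ u v : Vec p, 0 ≤ (inner ℝ (gradient g u - gradient g v) (u - v) : ℝ)) (x y : Vec p) :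
    g y + (inner ℝ (gradient g y) (x - y) : ℝ) ≤ g x := by
  set d := x - y with hd
  set F : ℝ → ℝ := fun s => g (y + s • d) - s * (inner ℝ (gradient g y) d : ℝ) with hF
  have key : F 0 ≤ F 1 := by
    apply aux_le_of_F01 F (fun s =>
      (inner ℝ (gradient g (y + s • d)) d : ℝ) - (inner ℝ (gradient g y) d : ℝ))
    · intro s
      have h1 := aux_hasDerivAt_line g hg y d s
      have ha : HasDerivAt (fun s : ℝ => s * (inner ℝ (gradient g y) d : ℝ))
          (inner ℝ (gradient g y) d : ℝ) s := by
        simpa using (hasDerivAt_id s).mul_const (inner ℝ (gradient g y) d : ℝ)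
      exact h1.sub ha
    · intro s hs
      have := hmono (y + s • d) y
      have heq : (y + s • d) - y = s • d := by abel
      rw [heq, inner_smul_right] at this
      have h2 : 0 ≤ (inner ℝ (gradient g (y + s • d) - gradient g y) d : ℝ) :=
        nonneg_of_mul_nonneg_right this hs.1
      rw [inner_sub_left] at h2
      linarith
  have e0 : F 0 = g y := by simp [hF]
  have e1 : F 1 = g x - (inner ℝ (gradient g y) d : ℝ) := by simp [hF, hd]
  rw [e0, e1] at key
  linarith

lemma aux_cocoercivity {p : ℕ} (g : Vec p → ℝ) (hg : Differentiable ℝ g) (L : ℝ) (hL : 0 < L)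
    (hLip : ∀ u v : Vec p, ‖gradient g u - gradient g v‖ ≤ L * ‖u - v‖)
    (hmono : ∀ u v : Vec p, 0 ≤ (inner ℝ (gradient g u - gradient g v) (u - v) : ℝ)) (x y : Vec p) :
    ‖gradient g x - gradient g y‖ ^ 2
      ≤ 2 * L * (g x - g y - (inner ℝ (gradient g y) (x - y) : ℝ)) := by
  set G := gradient g x - gradient g y with hG
  set z := x - L⁻¹ • G with hz
  have h1 := aux_convex_lower g hg hmono z y
  have h2 := aux_descent g hg L hLip z x
  have ezy : z - y = (x - y) - L⁻¹ • G := by rw [hz]; abel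
  have ezx : z - x = -(L⁻¹ • G) := by rw [hz]; abel
  have hnz : ‖z - x‖ ^ 2 = L⁻¹ ^ 2 * ‖G‖ ^ 2 := by
    rw [ezx, norm_neg, norm_smul, mul_pow]
    simp [abs_of_pos (inv_pos.mpr hL)]
  have hiy : (inner ℝ (gradient g y) (z - y) : ℝ)
      = (inner ℝ (gradient g y) (x - y) : ℝ) - L⁻¹ * (inner ℝ (gradient g y) G : ℝ) := by
    rw [ezy, inner_sub_right, inner_smul_right]
  have hix : (inner ℝ (gradient g x) (z - x) : ℝ) = - (L⁻¹ * (inner ℝ (gradient g x) G : ℝ)) := by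
    rw [ezx, inner_neg_right, inner_smul_right]
  have hGG : (inner ℝ (gradient g x) G : ℝ) - (inner ℝ (gradient g y) G : ℝ) = ‖G‖ ^ 2 := by
    rw [← inner_sub_left, ← hG, real_inner_self_eq_norm_sq]
  rw [hiy] at h1
  rw [hix, hnz] at h2
  have hL' : L⁻¹ * L = 1 := inv_mul_cancel₀ (ne_of_gt hL)
  have e1 : L / 2 * (L⁻¹ ^ 2 * ‖G‖ ^ 2) = L⁻¹ * ‖G‖ ^ 2 / 2 := by
    field_simp
  have e2 : L⁻¹ * (inner ℝ (gradient g x) G : ℝ) - L⁻¹ * (inner ℝ (gradient g y) G : ℝ)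
      = L⁻¹ * ‖G‖ ^ 2 := by rw [← mul_sub, hGG]
  have step : L⁻¹ * ‖G‖ ^ 2 / 2 ≤ g x - g y - (inner ℝ (gradient g y) (x - y) : ℝ) := by
    rw [e1] at h2; linarith
  have := mul_le_mul_of_nonneg_left step (by positivity : (0:ℝ) ≤ 2 * L)
  calc ‖G‖ ^ 2 = 2 * L * (L⁻¹ * ‖G‖ ^ 2 / 2) := by field_simp
    _ ≤ _ := this

lemma aux_sum_proj {ι X : Type*} [Fintype ι] [DecidableEq ι] [Fintype X] (j : ι) (h : X → ℝ) :
    ∑ π : ι → X, h (π j) = (Fintype.card X : ℝ) ^ (Fintype.card ι - 1) * ∑ a, h a := by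
  rw [Fintype.sum_equiv (Equiv.funSplitAt j X) _ (fun q => h q.1) (fun π => by simp)]
  rw [Fintype.sum_prod_type]
  simp only [Finset.sum_const, nsmul_eq_mul]
  rw [← Finset.mul_sum]
  have : Fintype.card ({k : ι // k ≠ j} → X) = Fintype.card X ^ (Fintype.card ι - 1) := by
    rw [Fintype.card_fun]
    congr 1
    have : Fintype.card {k : ι // k ≠ j} = Fintype.card ι - Fintype.card {k : ι // k = j} :=
      Fintype.card_subtype_compl _
    rw [this, Fintype.card_subtype_eq]
  rw [Finset.card_univ, this]
  push_cast
  ring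

lemma aux_expE_mono {n m : ℕ} (T : ℕ) (g h : Omega n m → ℝ) (hle : ∀ ω, g ω ≤ h ω) :
    expE T g ≤ expE T h := by
  unfold expE
  have hc : (0:ℝ) < Fintype.card (Fin T → Fin n → Equiv.Perm (Fin m)) := by
    exact_mod_cast Fintype.card_pos
  gcongr
  exact hle _

lemma aux_expE_const_mul {n m : ℕ} (T : ℕ) (a : ℝ) (g : Omega n m → ℝ) :
    expE T (fun ω => a * g ω) = a * expE T g := by
  unfold expE; rw [← Finset.mul_sum, mul_div_assoc]

lemma aux_expE_add {n m : ℕ} (T : ℕ) (g h : Omega n m → ℝ) :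
    expE T (fun ω => g ω + h ω) = expE T g + expE T h := by
  unfold expE
  rw [← add_div]
  congr 1
  exact Finset.sum_add_distrib

lemma aux_expE_proj {n m : ℕ} (t : ℕ) (g : (Fin n → Equiv.Perm (Fin m)) → ℝ) :
    expE (t + 1) (fun ω => g (ω t)) = expPerm g := by
  unfold expE expPerm
  have ht : t < t + 1 := Nat.lt_succ_self t
  have key : ∀ σ : Fin (t+1) → Fin n → Equiv.Perm (Fin m),
      (fun i => if h : t < t + 1 then σ ⟨t, h⟩ i else 1) = σ ⟨t, ht⟩ := by
    intro σ; funext i; rw [dif_pos ht]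
  have : (∑ σ : Fin (t+1) → Fin n → Equiv.Perm (Fin m),
      g fun i => if h : t < t + 1 then σ ⟨t, h⟩ i else 1)
      = ∑ σ : Fin (t+1) → Fin n → Equiv.Perm (Fin m), g (σ ⟨t, ht⟩) := by
    apply Finset.sum_congr rfl; intro σ _; rw [key σ]
  rw [this, aux_sum_proj (j := (⟨t, ht⟩ : Fin (t+1))) g]
  have hcard : (Fintype.card (Fin (t+1) → Fin n → Equiv.Perm (Fin m)) : ℝ)
      = (Fintype.card (Fin n → Equiv.Perm (Fin m)) : ℝ) ^ (t + 1) := by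
    rw [Fintype.card_fun]; push_cast [Fintype.card_fin]; rfl
  rw [hcard]
  have hX : (0:ℝ) < (Fintype.card (Fin n → Equiv.Perm (Fin m)) : ℝ) := by
    exact_mod_cast Fintype.card_pos
  rw [Fintype.card_fin]
  rw [pow_succ, Nat.add_sub_cancel]
  field_simp

lemma aux_perm_sum {m : ℕ} (ℓ : Fin (m+1)) (F : Fin (m+1) → ℝ) :
    ∑ σ : Equiv.Perm (Fin (m+1)), F (σ ℓ)
      = (Fintype.card (Equiv.Perm (Fin m)) : ℝ) * ∑ k, F k := by
  rw [Fintype.sum_equiv (Equiv.mulRight (Equiv.swap ℓ 0)) (fun σ => F (σ ℓ))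
      (fun τ => F (τ 0)) (fun σ => by simp [Equiv.Perm.mul_apply])]
  rw [← Equiv.sum_comp Equiv.Perm.decomposeFin.symm (fun τ : Equiv.Perm (Fin (m+1)) => F (τ 0))]
  rw [Fintype.sum_prod_type]
  simp only [Equiv.Perm.decomposeFin_symm_apply_zero]
  simp only [Finset.sum_const, nsmul_eq_mul, Finset.card_univ]
  rw [← Finset.mul_sum]

lemma aux_expPerm_sum {n m : ℕ} (hn : 0 < n) (hm : 0 < m) (ℓ : Fin m) (F : Fin n → Fin m → ℝ) :
    expPerm (fun π => ∑ i, F i (π i ℓ)) = (m:ℝ)⁻¹ * ∑ i, ∑ k, F i k := by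
  obtain ⟨m', rfl⟩ : ∃ m', m = m' + 1 := ⟨m - 1, (Nat.succ_pred_eq_of_pos hm).symm⟩
  unfold expPerm
  rw [Finset.sum_comm]
  set N : ℝ := (Fintype.card (Equiv.Perm (Fin (m'+1))) : ℝ) with hN
  have hNpos : 0 < N := by
    rw [hN]; exact_mod_cast (Fintype.card_pos (α := Equiv.Perm (Fin (m'+1))))
  have step : ∀ i : Fin n, ∑ π : Fin n → Equiv.Perm (Fin (m'+1)), F i (π i ℓ)
      = N ^ (n - 1) * ((Fintype.card (Equiv.Perm (Fin m')) : ℝ) * ∑ k, F i k) := by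
    intro i
    rw [aux_sum_proj (X := Equiv.Perm (Fin (m'+1))) i (fun σ => F i (σ ℓ)),
      aux_perm_sum ℓ (F i), Fintype.card_fin]
  rw [Finset.sum_congr rfl (fun i _ => step i)]
  rw [← Finset.mul_sum, ← Finset.mul_sum]
  have hcard : (Fintype.card (Fin n → Equiv.Perm (Fin (m'+1))) : ℝ) = N ^ n := by
    rw [Fintype.card_fun, Fintype.card_fin]; push_cast; rfl
  rw [hcard]
  have hfac : N = (m' + 1 : ℝ) * (Fintype.card (Equiv.Perm (Fin m')) : ℝ) := by
    rw [hN, Fintype.card_perm, Fintype.card_perm, Fintype.card_fin, Fintype.card_fin,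
      Nat.factorial_succ]
    push_cast; ring
  have hn' : N ^ n = N ^ (n - 1) * N := by
    rw [← pow_succ, Nat.sub_add_cancel hn]
  have hMpos : (0:ℝ) < (Fintype.card (Equiv.Perm (Fin m')) : ℝ) := by
    exact_mod_cast Fintype.card_pos
  rw [hn', hfac]
  have hNn : (0:ℝ) < N ^ (n-1) := by positivity
  push_cast
  field_simp

end Aux

set_option maxHeartbeats 1200000 in
/-- **Lemma 12.** Bound on the expected squared Frobenius norm of the stacked shuffled gradients. -/
theorem drr_lemma12
    (n m p : ℕ) (hn : 0 < n) (hm : 0 < m)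
    (W : Matrix (Fin n) (Fin n) ℝ)
    (hWpos : ∀ i j, 0 ≤ W i j) (hWsymm : W.IsSymm) (hWstoch : ∀ i, ∑ j, W i j = 1)
    (hρ : rhoW W < 1)
    (μ L : ℝ) (hμ : 0 < μ) (hμL : μ ≤ L)
    (f : Fin n → Fin m → Vec p → ℝ)
    (hdiff : ∀ i ℓ, Differentiable ℝ (f i ℓ))
    (hstrong : ∀ i ℓ (x y : Vec p),
      μ * ‖x - y‖ ^ 2 ≤ inner ℝ (gradient (f i ℓ) x - gradient (f i ℓ) y) (x - y))
    (hsmooth : ∀ i ℓ (x y : Vec p),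
      ‖gradient (f i ℓ) x - gradient (f i ℓ) y‖ ≤ L * ‖x - y‖)
    (xstar : Vec p)
    (hmin : ∀ y : Vec p,
      ((m : ℝ) * n)⁻¹ * ∑ i, ∑ ℓ, f i ℓ xstar ≤ ((m : ℝ) * n)⁻¹ * ∑ i, ∑ ℓ, f i ℓ y)
    (α : ℕ → ℝ) (hαpos : ∀ t, 0 < α t)
    (x0 : Fin n → Vec p)
    (x : Omega n m → ℕ → ℕ → Fin n → Vec p)
    (hxinit : ∀ ω i, x ω 0 0 i = x0 i)
    (hxstep : ∀ ω t (ℓ : Fin m) i, x ω t ((ℓ : ℕ) + 1) i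
      = ∑ j, W i j • (x ω t (ℓ : ℕ) j - α t • gradient (f j (ω t j ℓ)) (x ω t (ℓ : ℕ) j)))
    (hxepoch : ∀ ω t i, x ω (t + 1) 0 i = x ω t m i)
    :
    ∀ (t : ℕ) (ℓ : Fin m),
      expE (t + 1) (fun ω => ∑ i, ‖gradient (f i (ω t i ℓ)) (x ω t (ℓ : ℕ) i)‖ ^ 2)
        ≤ 6 * L ^ 2 * n * expE (t + 1) (fun ω =>
              ‖avg (x ω t (ℓ : ℕ)) - xbarStar f xstar (α t) (ω t) (ℓ : ℕ)‖ ^ 2)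
          + 6 * L ^ 2 * expE (t + 1) (fun ω => consSq (x ω t (ℓ : ℕ)))
          + 3 * n * sigStarSq f xstar + 6 * n * L * sigShuffleSq f xstar (α t) := by
  intro t ℓ
  have hL : 0 < L := lt_of_lt_of_le hμ hμL
  have hn0 : (0:ℝ) < n := by exact_mod_cast hn
  set Bfn : (Fin n → Equiv.Perm (Fin m)) → ℝ := fun π =>
    ((n : ℝ)⁻¹ * ∑ i, f i (π i ℓ) (xbarStar f xstar (α t) π ℓ))
      - ((n : ℝ)⁻¹ * ∑ i, f i (π i ℓ) xstar)
      - (inner ℝ ((n : ℝ)⁻¹ • ∑ i, gradient (f i (π i ℓ)) xstar)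
          (xbarStar f xstar (α t) π ℓ - xstar) : ℝ) with hBfn
  set Sfn : (Fin n → Equiv.Perm (Fin m)) → ℝ := fun π =>
    ∑ i, ‖gradient (f i (π i ℓ)) xstar‖ ^ 2 with hSfn
  have key : ∀ ω : Omega n m,
      ∑ i, ‖gradient (f i (ω t i ℓ)) (x ω t (ℓ : ℕ) i)‖ ^ 2
        ≤ 6 * L ^ 2 * (n:ℝ) * ‖avg (x ω t (ℓ : ℕ)) - xbarStar f xstar (α t) (ω t) (ℓ : ℕ)‖ ^ 2
          + (6 * L ^ 2 * consSq (x ω t (ℓ : ℕ))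
          + (6 * L * (n:ℝ) * Bfn (ω t) + 3 * Sfn (ω t))) := by
    intro ω
    have per : ∀ i, ‖gradient (f i (ω t i ℓ)) (x ω t (ℓ:ℕ) i)‖ ^ 2
        ≤ 6*L^2*‖x ω t (ℓ:ℕ) i - avg (x ω t (ℓ:ℕ))‖^2
          + 6*L^2*‖avg (x ω t (ℓ:ℕ)) - xbarStar f xstar (α t) (ω t) (ℓ:ℕ)‖^2
          + 6*L*(f i (ω t i ℓ) (xbarStar f xstar (α t) (ω t) (ℓ:ℕ)) - f i (ω t i ℓ) xstar
              - (inner ℝ (gradient (f i (ω t i ℓ)) xstar)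
                  (xbarStar f xstar (α t) (ω t) (ℓ:ℕ) - xstar) : ℝ))
          + 3*‖gradient (f i (ω t i ℓ)) xstar‖^2 := by
      intro i
      set k : Fin m := ω t i ℓ with hk
      set u : Vec p := x ω t (ℓ:ℕ) i with hu
      set xb : Vec p := avg (x ω t (ℓ:ℕ)) with hxb
      set xs : Vec p := xbarStar f xstar (α t) (ω t) (ℓ:ℕ) with hxs
      have hmono : ∀ a b : Vec p,
          0 ≤ (inner ℝ (gradient (f i k) a - gradient (f i k) b) (a - b) : ℝ) := fun a b =>
        le_trans (by positivity) (hstrong i k a b)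
      have hco := aux_cocoercivity (f i k) (hdiff i k) L hL (hsmooth i k) hmono xs xstar
      have htri : ‖gradient (f i k) u‖ ≤ ‖gradient (f i k) u - gradient (f i k) xs‖
          + ‖gradient (f i k) xs - gradient (f i k) xstar‖ + ‖gradient (f i k) xstar‖ := by
        calc ‖gradient (f i k) u‖ = ‖(gradient (f i k) u - gradient (f i k) xs)
            + (gradient (f i k) xs - gradient (f i k) xstar) + gradient (f i k) xstar‖ := by
              congr 1; abel
          _ ≤ _ := norm_add₃_le
      have h1 : ‖gradient (f i k) u - gradient (f i k) xs‖ ≤ L * ‖u - xs‖ := hsmooth i k u xs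
      have h2 : ‖u - xs‖ ≤ ‖u - xb‖ + ‖xb - xs‖ := by
        calc ‖u - xs‖ = ‖(u - xb) + (xb - xs)‖ := by congr 1; abel
          _ ≤ _ := norm_add_le _ _
      have s1 : ‖gradient (f i k) u‖^2 ≤ 3*‖gradient (f i k) u - gradient (f i k) xs‖^2
          + 3*‖gradient (f i k) xs - gradient (f i k) xstar‖^2
          + 3*‖gradient (f i k) xstar‖^2 := by
        nlinarith [htri, norm_nonneg (gradient (f i k) u),
          norm_nonneg (gradient (f i k) u - gradient (f i k) xs),
          norm_nonneg (gradient (f i k) xs - gradient (f i k) xstar),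
          norm_nonneg (gradient (f i k) xstar),
          sq_nonneg (‖gradient (f i k) u - gradient (f i k) xs‖
            - ‖gradient (f i k) xs - gradient (f i k) xstar‖),
          sq_nonneg (‖gradient (f i k) u - gradient (f i k) xs‖ - ‖gradient (f i k) xstar‖),
          sq_nonneg (‖gradient (f i k) xs - gradient (f i k) xstar‖
            - ‖gradient (f i k) xstar‖)]
      have s2 : ‖gradient (f i k) u - gradient (f i k) xs‖^2 ≤ L^2 * ‖u - xs‖^2 := by
        have := pow_le_pow_left₀ (norm_nonneg _) h1 2
        rw [mul_pow] at this
        exact this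
      have s3 : ‖u - xs‖^2 ≤ 2*‖u - xb‖^2 + 2*‖xb - xs‖^2 := by
        nlinarith [h2, norm_nonneg (u - xs), norm_nonneg (u - xb), norm_nonneg (xb - xs),
          sq_nonneg (‖u - xb‖ - ‖xb - xs‖)]
      have s4 : ‖gradient (f i k) u - gradient (f i k) xs‖^2
          ≤ L^2 * (2*‖u - xb‖^2 + 2*‖xb - xs‖^2) :=
        le_trans s2 (mul_le_mul_of_nonneg_left s3 (by positivity))
      linarith [s1, s4, hco]
    have hsum_c : (n:ℝ) * Bfn (ω t)
        = ∑ i, (f i (ω t i ℓ) (xbarStar f xstar (α t) (ω t) (ℓ:ℕ)) - f i (ω t i ℓ) xstar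
            - (inner ℝ (gradient (f i (ω t i ℓ)) xstar)
                (xbarStar f xstar (α t) (ω t) (ℓ:ℕ) - xstar) : ℝ)) := by
      simp only [hBfn]
      rw [Finset.sum_sub_distrib, Finset.sum_sub_distrib, ← sum_inner, real_inner_smul_left]
      field_simp
    calc ∑ i, ‖gradient (f i (ω t i ℓ)) (x ω t (ℓ:ℕ) i)‖ ^ 2
        ≤ ∑ i, (6*L^2*‖x ω t (ℓ:ℕ) i - avg (x ω t (ℓ:ℕ))‖^2
            + 6*L^2*‖avg (x ω t (ℓ:ℕ)) - xbarStar f xstar (α t) (ω t) (ℓ:ℕ)‖^2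
            + 6*L*(f i (ω t i ℓ) (xbarStar f xstar (α t) (ω t) (ℓ:ℕ)) - f i (ω t i ℓ) xstar
                - (inner ℝ (gradient (f i (ω t i ℓ)) xstar)
                    (xbarStar f xstar (α t) (ω t) (ℓ:ℕ) - xstar) : ℝ))
            + 3*‖gradient (f i (ω t i ℓ)) xstar‖^2) := Finset.sum_le_sum (fun i _ => per i)
      _ = 6 * L ^ 2 * (n:ℝ)
            * ‖avg (x ω t (ℓ:ℕ)) - xbarStar f xstar (α t) (ω t) (ℓ:ℕ)‖ ^ 2
            + (6 * L ^ 2 * consSq (x ω t (ℓ:ℕ))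
            + (6 * L * (n:ℝ) * Bfn (ω t) + 3 * Sfn (ω t))) := by
          rw [Finset.sum_add_distrib, Finset.sum_add_distrib, Finset.sum_add_distrib]
          rw [← Finset.mul_sum, ← Finset.mul_sum, ← Finset.mul_sum, ← Finset.mul_sum]
          rw [← hsum_c]
          have hconst : ∑ _i : Fin n,
              ‖avg (x ω t (ℓ:ℕ)) - xbarStar f xstar (α t) (ω t) (ℓ:ℕ)‖^2
              = (n:ℝ) * ‖avg (x ω t (ℓ:ℕ)) - xbarStar f xstar (α t) (ω t) (ℓ:ℕ)‖^2 := by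
            rw [Finset.sum_const, Finset.card_univ, Fintype.card_fin, nsmul_eq_mul]
          rw [hconst]
          have hcons : consSq (x ω t (ℓ:ℕ))
              = ∑ i, ‖x ω t (ℓ:ℕ) i - avg (x ω t (ℓ:ℕ))‖^2 := rfl
          rw [hcons, hSfn]
          ring
  have main := aux_expE_mono (t+1) _ _ key
  rw [aux_expE_add, aux_expE_add, aux_expE_add, aux_expE_const_mul, aux_expE_const_mul,
    aux_expE_const_mul, aux_expE_const_mul] at main
  rw [aux_expE_proj t Bfn, aux_expE_proj t Sfn] at main
  have hS : expPerm Sfn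
      = (m:ℝ)⁻¹ * ∑ i, ∑ k, ‖gradient (f i k) xstar‖ ^ 2 := by
    rw [hSfn]
    exact aux_expPerm_sum hn hm ℓ (fun i k => ‖gradient (f i k) xstar‖ ^ 2)
  rw [hS] at main
  have hB : expPerm Bfn ≤ sigShuffleSq f xstar (α t) := by
    rw [hBfn]
    unfold sigShuffleSq
    exact le_ciSup (f := fun ℓ' : Fin m => expPerm fun π =>
      ((n : ℝ)⁻¹ * ∑ i, f i (π i ℓ') (xbarStar f xstar (α t) π ℓ'))
        - ((n : ℝ)⁻¹ * ∑ i, f i (π i ℓ') xstar)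
        - (inner ℝ ((n : ℝ)⁻¹ • ∑ i, gradient (f i (π i ℓ')) xstar)
            (xbarStar f xstar (α t) π ℓ' - xstar) : ℝ))
      (Set.Finite.bddAbove (Set.finite_range _)) ℓ
  have hB' : 6 * L * (n:ℝ) * expPerm Bfn ≤ 6 * (n:ℝ) * L * sigShuffleSq f xstar (α t) := by
    calc 6 * L * (n:ℝ) * expPerm Bfn ≤ 6 * L * (n:ℝ) * sigShuffleSq f xstar (α t) :=
          mul_le_mul_of_nonneg_left hB (by positivity)
      _ = 6 * (n:ℝ) * L * sigShuffleSq f xstar (α t) := by ring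
  have hS' : 3 * ((m:ℝ)⁻¹ * ∑ i, ∑ k, ‖gradient (f i k) xstar‖ ^ 2)
      = 3 * (n:ℝ) * sigStarSq f xstar := by
    rw [sigStarSq]
    have hm0 : (0:ℝ) < m := by exact_mod_cast hm
    field_simp
  linarith [main, hB', hS'.le, hS'.ge]

end DRR
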